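/- Let R be a finite set with |R| = n ≥ 2, u : R → ℝ a utility function with OPT = min_{r∈R} u(r) > 0, let ε > 0, and let λ satisfy 0 < λ ≤ ε·OPT/(3 ln n). If r* is sampled by the exponential mechanism, i.e. with probability proportional to exp(−u(r)/λ), then the expected utility satisfies E[u(r*)] ≤ (1+ε)·OPT. -/

import Mathlib

open Finset

lemma aux_exp_mono {lam s t : ℝ} (hlam : 0 < lam) (hs : lam ≤ s) (hts : s ≤ t) :
    t * Real.exp (-t/lam) ≤ s * Real.exp (-s/lam) := by
  have hspos : 0 < s := lt_of_lt_of_le hlam hs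
  have h1 : t ≤ s * Real.exp ((t - s)/lam) := by
    have h2 : (t - s)/lam + 1 ≤ Real.exp ((t-s)/lam) := by
      have := Real.add_one_le_exp ((t-s)/lam); linarith
    have h3 : t = s * ((t - s)/s + 1) := by field_simp; ring
    have h4 : (t - s)/s ≤ (t - s)/lam :=
      div_le_div_of_nonneg_left (by linarith) hlam hs
    nlinarith
  calc t * Real.exp (-t/lam) ≤ s * Real.exp ((t-s)/lam) * Real.exp (-t/lam) :=
        mul_le_mul_of_nonneg_right h1 (Real.exp_pos _).le
    _ = s * Real.exp (-s/lam) := by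
        rw [mul_assoc, ← Real.exp_add]; ring_nf

/-- **Exponential mechanism, relative-error expectation bound.**
Let `R` be a finite set with `|R| = n ≥ 2`, `u : R → ℝ` with `OPT = min u > 0`,
`ε > 0`, and `0 < lam ≤ ε · OPT / (3 ln n)`.  If `r*` is sampled with probability
proportional to `exp (-u r / lam)`, then `E[u r*] ≤ (1+ε)·OPT`. -/
theorem exponential_mechanism_relative_expectation_bound
    {R : Type*} [Fintype R] [Nonempty R] (n : ℕ) (hn : Fintype.card R = n) (hn2 : 2 ≤ n)
    (u : R → ℝ) (OPT : ℝ) (hOPT : OPT = Finset.univ.inf' Finset.univ_nonempty u)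
    (hOPTpos : 0 < OPT)
    (eps lam : ℝ) (heps : 0 < eps) (hlam : 0 < lam)
    (hlam' : lam ≤ eps * OPT / (3 * Real.log n)) :
    (∑ r : R, (Real.exp (-u r / lam) / ∑ p : R, Real.exp (-u p / lam)) * u r)
      ≤ (1 + eps) * OPT := by
  set Z : ℝ := ∑ p : R, Real.exp (-u p / lam) with hZ
  have hZpos : 0 < Z := Finset.sum_pos (fun p _ => Real.exp_pos _) univ_nonempty
  obtain ⟨r0, -, hr0⟩ := Finset.exists_mem_eq_inf' (univ_nonempty (α := R)) u
  have hOPTr0 : OPT = u r0 := by rw [hOPT, hr0]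
  have hle : ∀ r : R, OPT ≤ u r := fun r => hOPT ▸ Finset.inf'_le _ (mem_univ r)
  have hZge : Real.exp (-OPT/lam) ≤ Z := by
    rw [hOPTr0]
    exact Finset.single_le_sum (f := fun p => Real.exp (-u p / lam))
      (fun p _ => (Real.exp_pos _).le) (mem_univ r0)
  have hn1 : (1:ℝ) < (n:ℝ) := by exact_mod_cast lt_of_lt_of_le one_lt_two hn2
  have hnpos : (0:ℝ) < (n:ℝ) := by linarith
  have hn2' : (2:ℝ) ≤ (n:ℝ) := by exact_mod_cast hn2
  have hL : 0 < Real.log n := Real.log_pos hn1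
  set L : ℝ := Real.log n with hLdef
  have h2L : 1 ≤ 2 * L := by
    have h4 : (Real.exp 1) ≤ (n:ℝ)^2 := by
      have := Real.exp_one_lt_d9
      nlinarith
    have := Real.log_le_log (Real.exp_pos 1) h4
    rw [Real.log_exp, Real.log_pow] at this
    simpa using this
  set s : ℝ := 2 * lam * L with hsdef
  have hls : lam ≤ s := by nlinarith
  have hspos : 0 < s := lt_of_lt_of_le hlam hls
  have hkey : 3 * lam * L ≤ eps * OPT := by
    have := (le_div_iff₀ (by positivity : (0:ℝ) < 3 * L)).1 hlam'
    linarith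
  have hterm : ∀ r : R,
      (Real.exp (-u r / lam) / Z) * u r
        ≤ (Real.exp (-u r / lam) / Z) * (OPT + s) + s / (n:ℝ)^2 := by
    intro r
    have hpnn : 0 ≤ Real.exp (-u r / lam) / Z := by positivity
    by_cases hc : u r ≤ OPT + s
    · have := mul_le_mul_of_nonneg_left hc hpnn
      have hsn : 0 ≤ s / (n:ℝ)^2 := by positivity
      linarith
    · push_neg at hc
      set t : ℝ := u r - OPT with htdef
      have hst : s ≤ t := by linarith
      have ht0 : 0 ≤ t := le_trans hspos.le hst
      have hfact : Real.exp (-u r / lam) = Real.exp (-OPT/lam) * Real.exp (-t/lam) := by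
        rw [← Real.exp_add]; congr 1; field_simp [htdef]; ring
      have hp_le : Real.exp (-u r / lam) / Z ≤ Real.exp (-t/lam) := by
        rw [hfact, div_le_iff₀ hZpos]
        calc Real.exp (-OPT/lam) * Real.exp (-t/lam)
            = Real.exp (-t/lam) * Real.exp (-OPT/lam) := by ring
          _ ≤ Real.exp (-t/lam) * Z :=
              mul_le_mul_of_nonneg_left hZge (Real.exp_pos _).le
      have hmono := aux_exp_mono hlam hls hst
      have hexp_s : Real.exp (-s/lam) = ((n:ℝ)^2)⁻¹ := by
        have h7 : -s/lam = -(2 * L) := by field_simp [hsdef]; ring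
        rw [h7, Real.exp_neg]
        congr 1
        rw [show (2:ℝ) * L = Real.log ((n:ℝ)^2) by rw [Real.log_pow]; norm_num; exact hLdef]
        exact Real.exp_log (by positivity)
      have h5 : (Real.exp (-u r / lam) / Z) * t ≤ s / (n:ℝ)^2 := by
        calc (Real.exp (-u r / lam) / Z) * t ≤ Real.exp (-t/lam) * t :=
              mul_le_mul_of_nonneg_right hp_le ht0
          _ = t * Real.exp (-t/lam) := by ring
          _ ≤ s * Real.exp (-s/lam) := hmono
          _ = s / (n:ℝ)^2 := by rw [hexp_s]; ring
      nlinarith [mul_le_mul_of_nonneg_left (hle r) hpnn]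
  have hsum1 : ∑ r : R, Real.exp (-u r / lam) / Z = 1 := by
    rw [← Finset.sum_div, div_self hZpos.ne']
  have hsum2 : (∑ r : R, (Real.exp (-u r / lam) / Z) * u r)
      ≤ (OPT + s) + (n:ℝ) * (s / (n:ℝ)^2) := by
    calc (∑ r : R, (Real.exp (-u r / lam) / Z) * u r)
        ≤ ∑ r : R, ((Real.exp (-u r / lam) / Z) * (OPT + s) + s / (n:ℝ)^2) :=
          Finset.sum_le_sum (fun r _ => hterm r)
      _ = (∑ r : R, Real.exp (-u r / lam) / Z) * (OPT + s)
            + (Fintype.card R : ℝ) * (s / (n:ℝ)^2) := by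
          rw [Finset.sum_add_distrib, ← Finset.sum_mul, Finset.sum_const,
            Finset.card_univ, nsmul_eq_mul]
      _ = (OPT + s) + (n:ℝ) * (s / (n:ℝ)^2) := by rw [hsum1, hn, one_mul]
  have h6 : (n:ℝ) * (s / (n:ℝ)^2) = s / (n:ℝ) := by field_simp
  have h7 : s / (n:ℝ) ≤ s / 2 := div_le_div_of_nonneg_left hspos.le two_pos hn2'
  calc (∑ r : R, (Real.exp (-u r / lam) / Z) * u r)
      ≤ (OPT + s) + s / 2 := by rw [h6] at hsum2; linarith
    _ = OPT + 3 * lam * L := by rw [hsdef]; ring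
    _ ≤ OPT + eps * OPT := by linarith
    _ = (1 + eps) * OPT := by ring
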